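/- Discrete monotonicity property of the relay at the final node (eq. (4.5)): Let u₁, u₂ ∈ L²(0,T) be continuous functions with u₁(t) = u₂(t) for all t ∈ [0,s], where 0 ≤ s < T, and suppose both u₁ and u₂ are affine on [s,T]. Let ξ ∈ [−1,1] and let y₁, y₂ be the dynamic relay solutions for (u₁, ξ) and (u₂, ξ). Then (y₁(T) − y₂(T))·(u₁(T) − u₂(T)) ≥ 0. -/

import Mathlib

open MeasureTheory Set

/-- The function `g(u) = k·(u − ρ₂)⁺ − k·(ρ₁ − u)⁺` driving the dynamic relay. -/
noncomputable def relayG (ρ₁ ρ₂ k u : ℝ) : ℝ :=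
  k * max (u - ρ₂) 0 - k * max (ρ₁ - u) 0

/-- `y` (with a.e. derivative `y'`) is a dynamic relay solution on `[0,T]` for input `u`
and initial state `ξ`: `y ∈ H¹(0,T)` (encoded by `y' ∈ L²(0,T)` together with the
fundamental-theorem-of-calculus representation), `y(0) = ξ`, `|y| ≤ 1` on `[0,T]`, and
`q(t) := g(u(t)) − y'(t)` satisfies `q(t)(z − y(t)) ≤ 0` for all `z ∈ [−1,1]`, a.e. `t`. -/
def IsDynRelay (T ρ₁ ρ₂ k : ℝ) (u : ℝ → ℝ) (ξ : ℝ) (y y' : ℝ → ℝ) : Prop :=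
  MemLp y' 2 (volume.restrict (Ioc (0:ℝ) T)) ∧
  y 0 = ξ ∧
  (∀ t ∈ Icc (0:ℝ) T, y t = ξ + ∫ s in (0:ℝ)..t, y' s) ∧
  (∀ t ∈ Icc (0:ℝ) T, |y t| ≤ 1) ∧
  (∀ᵐ t ∂(volume.restrict (Ioo (0:ℝ) T)),
    ∀ z ∈ Icc (-1:ℝ) 1, (relayG ρ₁ ρ₂ k (u t) - y' t) * (z - y t) ≤ 0)

lemma relayG_mono (ρ₁ ρ₂ k : ℝ) (hk : 0 ≤ k) {a b : ℝ} (h : a ≤ b) :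
    relayG ρ₁ ρ₂ k a ≤ relayG ρ₁ ρ₂ k b := by
  unfold relayG
  have h1 : max (a - ρ₂) 0 ≤ max (b - ρ₂) 0 := max_le_max (by linarith) le_rfl
  have h2 : max (ρ₁ - b) 0 ≤ max (ρ₁ - a) 0 := max_le_max (by linarith) le_rfl
  have := mul_le_mul_of_nonneg_left h1 hk
  have := mul_le_mul_of_nonneg_left h2 hk
  linarith

lemma relay_comparison (T ρ₁ ρ₂ k : ℝ) (hT : 0 < T) (hk : 0 < k)
    (u₁ u₂ : ℝ → ℝ) (hle : ∀ t ∈ Icc (0:ℝ) T, u₂ t ≤ u₁ t)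
    (ξ : ℝ) (y₁ y₁' y₂ y₂' : ℝ → ℝ)
    (h₁ : IsDynRelay T ρ₁ ρ₂ k u₁ ξ y₁ y₁')
    (h₂ : IsDynRelay T ρ₁ ρ₂ k u₂ ξ y₂ y₂') :
    y₂ T ≤ y₁ T := by
  obtain ⟨hL1, hy01, hFTC1, hbd1, hVI1⟩ := h₁
  obtain ⟨hL2, hy02, hFTC2, hbd2, hVI2⟩ := h₂
  haveI : IsFiniteMeasure (volume.restrict (Ioc (0:ℝ) T)) := by
    constructor
    rw [Measure.restrict_apply_univ, Real.volume_Ioc]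
    exact ENNReal.ofReal_lt_top
  have hi₁ : IntegrableOn y₁' (Ioc (0:ℝ) T) := hL1.integrable (by norm_num)
  have hi₂ : IntegrableOn y₂' (Ioc (0:ℝ) T) := hL2.integrable (by norm_num)
  -- continuity of w on Icc 0 T
  set w : ℝ → ℝ := fun t => y₂ t - y₁ t with hw
  have hw0 : w 0 = 0 := by simp [hw, hy01, hy02]
  have hwcont : ContinuousOn w (Icc (0:ℝ) T) := by
    have c1 : ContinuousOn (fun x => ∫ t in Ioc (0:ℝ) x, y₁' t) (Icc (0:ℝ) T) :=
      intervalIntegral.continuousOn_primitive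
        (by rwa [integrableOn_Icc_iff_integrableOn_Ioc])
    have c2 : ContinuousOn (fun x => ∫ t in Ioc (0:ℝ) x, y₂' t) (Icc (0:ℝ) T) :=
      intervalIntegral.continuousOn_primitive
        (by rwa [integrableOn_Icc_iff_integrableOn_Ioc])
    have hc : ContinuousOn (fun x => (∫ t in Ioc (0:ℝ) x, y₂' t) - ∫ t in Ioc (0:ℝ) x, y₁' t)
        (Icc (0:ℝ) T) := c2.sub c1
    refine hc.congr fun t ht => ?_
    have e1 := hFTC1 t ht
    have e2 := hFTC2 t ht
    rw [hw]
    simp only [e1, e2, intervalIntegral.integral_of_le ht.1]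
    ring
  by_contra hcon
  push_neg at hcon
  have hwT : 0 < w T := by simp only [hw]; linarith
  set S : Set ℝ := Icc (0:ℝ) T ∩ {t | w t ≤ 0} with hS
  have hS0 : (0:ℝ) ∈ S := ⟨⟨le_rfl, hT.le⟩, by simp [hw0]⟩
  have hScl : IsClosed S := hwcont.preimage_isClosed_of_isClosed isClosed_Icc isClosed_Iic
  have hScomp : IsCompact S :=
    isCompact_Icc.of_isClosed_subset hScl inter_subset_left
  set t₀ : ℝ := sSup S with ht₀def
  have ht₀S : t₀ ∈ S := hScomp.sSup_mem ⟨0, hS0⟩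
  have ht₀Icc : t₀ ∈ Icc (0:ℝ) T := ht₀S.1
  have ht₀w : w t₀ ≤ 0 := ht₀S.2
  have ht₀T : t₀ < T := by
    rcases lt_or_eq_of_le ht₀Icc.2 with h | h
    · exact h
    · exfalso; rw [h] at ht₀w; linarith
  have hbdd : BddAbove S := hScomp.bddAbove
  -- on (t₀, T], w > 0
  have hwpos : ∀ t ∈ Ioo t₀ T, 0 < w t := by
    intro t ht
    by_contra hc
    push_neg at hc
    have : t ∈ S := ⟨⟨le_trans ht₀Icc.1 ht.1.le, ht.2.le⟩, hc⟩
    exact absurd (le_csSup hbdd this) (not_le.mpr ht.1)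
  -- a.e. on Ioo 0 T, if t ∈ Ioo t₀ T then y₂' t ≤ y₁' t
  have key : ∀ᵐ t ∂(volume.restrict (Ioo (0:ℝ) T)), t ∈ Ioo t₀ T → y₂' t ≤ y₁' t := by
    filter_upwards [hVI1, hVI2, ae_restrict_mem measurableSet_Ioo] with t hv1 hv2 hIoo hmem
    have htIcc : t ∈ Icc (0:ℝ) T := ⟨hIoo.1.le, hIoo.2.le⟩
    have hb1 : y₁ t ∈ Icc (-1:ℝ) 1 := abs_le.mp (hbd1 t htIcc)
    have hb2 : y₂ t ∈ Icc (-1:ℝ) 1 := abs_le.mp (hbd2 t htIcc)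
    have hz1 := hv1 (y₂ t) hb2
    have hz2 := hv2 (y₁ t) hb1
    have hg : relayG ρ₁ ρ₂ k (u₂ t) ≤ relayG ρ₁ ρ₂ k (u₁ t) :=
      relayG_mono ρ₁ ρ₂ k hk.le (hle t htIcc)
    have hwt : 0 < y₂ t - y₁ t := hwpos t hmem
    nlinarith [hz1, hz2, mul_nonneg (sub_nonneg.mpr hg) hwt.le]
  -- transfer to restrict (Ioc t₀ T)
  have key2 : ∀ᵐ t ∂(volume.restrict (Ioc t₀ T)), y₂' t - y₁' t ≤ 0 := by
    rw [← Measure.restrict_congr_set Ioo_ae_eq_Ioc]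
    have hsub : Ioo t₀ T ⊆ Ioo (0:ℝ) T := Ioo_subset_Ioo ht₀Icc.1 le_rfl
    have := ae_restrict_of_ae_restrict_of_subset hsub key
    filter_upwards [this, ae_restrict_mem measurableSet_Ioo] with t h1 h2
    have := h1 h2
    linarith
  -- integrability on [t₀, T]
  have hii₁ : IntervalIntegrable y₁' volume t₀ T := by
    rw [intervalIntegrable_iff_integrableOn_Ioc_of_le ht₀T.le]
    exact hi₁.mono_set (Ioc_subset_Ioc ht₀Icc.1 le_rfl)
  have hii₂ : IntervalIntegrable y₂' volume t₀ T := by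
    rw [intervalIntegrable_iff_integrableOn_Ioc_of_le ht₀T.le]
    exact hi₂.mono_set (Ioc_subset_Ioc ht₀Icc.1 le_rfl)
  have hii₁' : IntervalIntegrable y₁' volume 0 t₀ := by
    rw [intervalIntegrable_iff_integrableOn_Ioc_of_le ht₀Icc.1]
    exact hi₁.mono_set (Ioc_subset_Ioc le_rfl ht₀Icc.2)
  have hii₂' : IntervalIntegrable y₂' volume 0 t₀ := by
    rw [intervalIntegrable_iff_integrableOn_Ioc_of_le ht₀Icc.1]
    exact hi₂.mono_set (Ioc_subset_Ioc le_rfl ht₀Icc.2)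
  -- w T - w t₀ = ∫ t₀..T (y₂' - y₁')
  have hadd1 := intervalIntegral.integral_add_adjacent_intervals hii₁' hii₁
  have hadd2 := intervalIntegral.integral_add_adjacent_intervals hii₂' hii₂
  have eT1 := hFTC1 T ⟨hT.le, le_rfl⟩
  have eT2 := hFTC2 T ⟨hT.le, le_rfl⟩
  have et1 := hFTC1 t₀ ht₀Icc
  have et2 := hFTC2 t₀ ht₀Icc
  have hdiff : w T - w t₀ = ∫ t in t₀..T, (y₂' t - y₁' t) := by
    rw [intervalIntegral.integral_sub hii₂ hii₁]
    simp only [hw, eT1, eT2, et1, et2]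
    linarith
  have hint : ∫ t in t₀..T, (y₂' t - y₁' t) ≤ 0 := by
    rw [intervalIntegral.integral_of_le ht₀T.le]
    exact integral_nonpos_of_ae key2
  linarith

/-- Discrete monotonicity property of the relay at the final node (eq. (4.5)):
if two continuous inputs coincide on `[0,s]` and are affine on `[s,T]`, then the
relay outputs at `T` are ordered like the inputs at `T`. -/
theorem dyn_relay_final_node_monotonicity (T ρ₁ ρ₂ k : ℝ)
    (hT : 0 < T) (hρ : ρ₁ < ρ₂) (hk : 0 < k)
    (s : ℝ) (hs0 : 0 ≤ s) (hsT : s < T)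
    (u₁ u₂ : ℝ → ℝ)
    (hc₁ : ContinuousOn u₁ (Icc (0:ℝ) T)) (hc₂ : ContinuousOn u₂ (Icc (0:ℝ) T))
    (hu₁ : MemLp u₁ 2 (volume.restrict (Ioc (0:ℝ) T)))
    (hu₂ : MemLp u₂ 2 (volume.restrict (Ioc (0:ℝ) T)))
    (heq : ∀ t ∈ Icc (0:ℝ) s, u₁ t = u₂ t)
    (haff₁ : ∃ a b : ℝ, ∀ t ∈ Icc s T, u₁ t = a * t + b)
    (haff₂ : ∃ a b : ℝ, ∀ t ∈ Icc s T, u₂ t = a * t + b)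
    (ξ : ℝ) (hξ : ξ ∈ Icc (-1:ℝ) 1)
    (y₁ y₁' y₂ y₂' : ℝ → ℝ)
    (h₁ : IsDynRelay T ρ₁ ρ₂ k u₁ ξ y₁ y₁')
    (h₂ : IsDynRelay T ρ₁ ρ₂ k u₂ ξ y₂ y₂') :
    0 ≤ (y₁ T - y₂ T) * (u₁ T - u₂ T) := by
  obtain ⟨a₁, b₁, ha₁⟩ := haff₁
  obtain ⟨a₂, b₂, ha₂⟩ := haff₂
  have hsS : u₁ s = u₂ s := heq s ⟨hs0, le_rfl⟩
  have hsI : s ∈ Icc s T := ⟨le_rfl, hsT.le⟩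
  have hTI : T ∈ Icc s T := ⟨hsT.le, le_rfl⟩
  have heqs : a₁ * s + b₁ = a₂ * s + b₂ := by
    rw [← ha₁ s hsI, ← ha₂ s hsI]; exact hsS
  have hTs : 0 < T - s := by linarith
  -- pointwise difference formula on [s,T]
  have hdifft : ∀ t ∈ Icc s T, u₁ t - u₂ t = (a₁ - a₂) * (t - s) := by
    intro t ht
    rw [ha₁ t ht, ha₂ t ht]
    nlinarith [heqs]
  have hdT : u₁ T - u₂ T = (a₁ - a₂) * (T - s) := hdifft T hTI
  rcases le_total (u₂ T) (u₁ T) with hcase | hcase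
  · have ha : 0 ≤ a₁ - a₂ := by nlinarith
    have hle : ∀ t ∈ Icc (0:ℝ) T, u₂ t ≤ u₁ t := by
      intro t ht
      rcases le_total t s with hts | hts
      · exact le_of_eq (heq t ⟨ht.1, hts⟩).symm
      · have := hdifft t ⟨hts, ht.2⟩
        nlinarith
    have := relay_comparison T ρ₁ ρ₂ k hT hk u₁ u₂ hle ξ y₁ y₁' y₂ y₂' h₁ h₂
    exact mul_nonneg (by linarith) (by linarith)
  · have ha : a₁ - a₂ ≤ 0 := by nlinarith
    have hle : ∀ t ∈ Icc (0:ℝ) T, u₁ t ≤ u₂ t := by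
      intro t ht
      rcases le_total t s with hts | hts
      · exact le_of_eq (heq t ⟨ht.1, hts⟩)
      · have := hdifft t ⟨hts, ht.2⟩
        nlinarith
    have := relay_comparison T ρ₁ ρ₂ k hT hk u₂ u₁ hle ξ y₂ y₂' y₁ y₁' h₂ h₁
    nlinarith [this, hcase]
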